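/- Let y_1, y_2 be real numbers and m, n nonnegative integers. Then for every real x: Σ_{a=0}^{n} C(m+n+1, n−a) 2^{m+1+a} E_{n−a}(2x + y_1) E_{m+a+1}(−x + y_2) + Σ_{a=0}^{m} C(m+n+1, m−a) 2^{m−a} E_{m−a}(−x + y_2) E_{n+a+1}(2x + y_1) = E_{m+n+1}(2y_2 + y_1) + 2^{m+n+1} E_{m+n+1}((2y_2 + y_1)/2) − 2^{m+n+1} E_{m+n+1}((2y_2 + y_1 + 1)/2). -/

import Mathlib

open Finset

/-- Higher-order Euler polynomial `E_m^{(α)}(z)` of real order `α`, defined as the `m`-th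
Taylor coefficient (times `m!`) of the generating function `(2/(e^u+1))^α e^{uz}` at `u = 0`. -/
noncomputable def eulerH (α : ℝ) (m : ℕ) (z : ℝ) : ℝ :=
  iteratedDeriv m (fun u : ℝ => (2 / (Real.exp u + 1)) ^ α * Real.exp (u * z)) 0

noncomputable def Efun (z : ℝ) : ℝ → ℝ := fun u => 2 / (Real.exp u + 1) * Real.exp (u * z)

lemma eulerH_one_eq (m : ℕ) (z : ℝ) : eulerH 1 m z = iteratedDeriv m (Efun z) 0 := by
  simp only [eulerH, Real.rpow_one]
  rfl

lemma contDiff_Efun (z : ℝ) : ContDiff ℝ ⊤ (Efun z) := by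
  apply ContDiff.mul
  · exact contDiff_const.div (Real.contDiff_exp.add contDiff_const) (fun u => by positivity)
  · exact Real.contDiff_exp.comp (contDiff_id.mul contDiff_const)

lemma diff_id (f : ℝ → ℝ) (hf : ContDiff ℝ ⊤ f) (k : ℕ) :
    Differentiable ℝ (iteratedDeriv k f) :=
  hf.differentiable_iteratedDeriv k (lt_top_iff_ne_top.mpr (by simp))

lemma pascal_sum (A B : ℕ → ℝ) (N : ℕ) :
    ∑ j ∈ range (N+1), (N.choose j : ℝ) * A (j+1) * B (N-j)
      + ∑ j ∈ range (N+1), (N.choose j : ℝ) * A j * B (N+1-j)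
    = ∑ j ∈ range (N+2), ((N+1).choose j : ℝ) * A j * B (N+1-j) := by
  rw [Finset.sum_range_succ' (fun j => ((N+1).choose j : ℝ) * A j * B (N+1-j)) (N+1)]
  simp only [Nat.succ_sub_succ, Nat.choose_succ_succ, Nat.choose_zero_right, Nat.cast_add,
    Nat.cast_one, Nat.sub_zero]
  rw [Finset.sum_congr rfl (fun i _ => by ring_nf :
    ∀ i ∈ range (N+1), ((N.choose i : ℝ) + (N.choose (i+1) : ℝ)) * A (i+1) * B (N-i)
      = (N.choose i : ℝ) * A (i+1) * B (N-i) + (N.choose (i+1) : ℝ) * A (i+1) * B (N-i))]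
  rw [Finset.sum_add_distrib]
  rw [Finset.sum_range_succ (fun i => (N.choose (i+1) : ℝ) * A (i+1) * B (N-i)) N]
  rw [Finset.sum_range_succ' (fun j => (N.choose j : ℝ) * A j * B (N+1-j)) N]
  simp only [Nat.succ_sub_succ, Nat.choose_succ_self, Nat.cast_zero, Nat.choose_zero_right,
    Nat.cast_one, Nat.sub_zero, zero_mul, add_zero, one_mul]
  ring

lemma leibniz_aux (f g : ℝ → ℝ) (hf : ContDiff ℝ ⊤ f) (hg : ContDiff ℝ ⊤ g) (N : ℕ) :
    iteratedDeriv N (fun u => f u * g u) = fun x => ∑ j ∈ Finset.range (N + 1),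
      (N.choose j : ℝ) * iteratedDeriv j f x * iteratedDeriv (N - j) g x := by
  induction N with
  | zero => simp
  | succ N ih =>
    funext x
    rw [iteratedDeriv_succ, ih]
    rw [deriv_fun_sum (fun j _ => by
      exact (((diff_id f hf j).differentiableAt.const_mul _).mul
        (diff_id g hg (N - j)).differentiableAt))]
    have hterm : ∀ j ∈ Finset.range (N + 1),
        deriv (fun x => (N.choose j : ℝ) * iteratedDeriv j f x * iteratedDeriv (N - j) g x) x
          = (N.choose j : ℝ) * iteratedDeriv (j+1) f x * iteratedDeriv (N - j) g x
            + (N.choose j : ℝ) * iteratedDeriv j f x * iteratedDeriv (N + 1 - j) g x := by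
      intro j hj
      rw [deriv_fun_mul (((diff_id f hf j).differentiableAt).const_mul _)
            (diff_id g hg (N - j)).differentiableAt,
          deriv_const_mul _ (diff_id f hf j).differentiableAt,
          ← iteratedDeriv_succ, ← iteratedDeriv_succ]
      have hje : N - j + 1 = N + 1 - j := by
        have := Finset.mem_range.mp hj; omega
      rw [hje]
    rw [Finset.sum_congr rfl hterm, Finset.sum_add_distrib]
    exact pascal_sum (fun k => iteratedDeriv k f x) (fun k => iteratedDeriv k g x) N

lemma contDiff_Efun2 (z : ℝ) : ContDiff ℝ ⊤ (fun u => Efun z (2*u)) :=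
  (contDiff_Efun z).comp (contDiff_const.mul contDiff_id)

lemma iteratedDeriv_Efun2 (k : ℕ) (z : ℝ) :
    iteratedDeriv k (fun u => Efun z (2*u)) 0 = 2^k * eulerH 1 k z := by
  have h := congrFun (iteratedDeriv_comp_const_mul (n := k) ((contDiff_Efun z).of_le le_top) 2) 0
  rw [h, mul_zero, eulerH_one_eq]

lemma key_alg (A Ew X Y : ℝ) (hA : A + 1 ≠ 0) (hB : A * A + 1 ≠ 0) (hXY : X * Y = Ew) :
    2/(A+1)*X * (2/(A*A+1)*Y) = 2/(A+1)*Ew + (2/(A*A+1)*Ew - 2/(A*A+1)*(Ew*A)) := by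
  subst hXY
  field_simp
  ring

lemma key_fun (x y1 y2 u : ℝ) :
    Efun (2*x+y1) u * Efun (-x+y2) (2*u)
      = Efun (2*y2+y1) u + (Efun ((2*y2+y1)/2) (2*u) - Efun ((2*y2+y1+1)/2) (2*u)) := by
  have hA : Real.exp u + 1 ≠ 0 := by positivity
  have hB : Real.exp u * Real.exp u + 1 ≠ 0 := by positivity
  have h2 : Real.exp (2*u) = Real.exp u * Real.exp u := by rw [two_mul, Real.exp_add]
  have h3 : Real.exp (u*(2*x+y1)) * Real.exp (2*u*(-x+y2)) = Real.exp (u*(2*y2+y1)) := by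
    rw [← Real.exp_add]; congr 1; ring
  have h5 : Real.exp (2*u*((2*y2+y1)/2)) = Real.exp (u*(2*y2+y1)) := by congr 1; ring
  have h4 : Real.exp (2*u*((2*y2+y1+1)/2)) = Real.exp (u*(2*y2+y1)) * Real.exp u := by
    rw [← Real.exp_add]; congr 1; ring
  simp only [Efun, h2, h5, h4]
  exact key_alg (Real.exp u) _ _ _ hA hB h3

lemma iteratedDeriv_add_sub (f g h : ℝ → ℝ) (hf : ContDiff ℝ ⊤ f) (hg : ContDiff ℝ ⊤ g)
    (hh : ContDiff ℝ ⊤ h) (N : ℕ) (x : ℝ) :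
    iteratedDeriv N (fun u => f u + (g u - h u)) x
      = iteratedDeriv N f x + (iteratedDeriv N g x - iteratedDeriv N h x) := by
  have h1 : (fun u => f u + (g u - h u)) = f + (g - h) := rfl
  simp only [← iteratedDerivWithin_univ, h1]
  have e1 : iteratedDerivWithin N (f + (g - h)) Set.univ x
      = iteratedDerivWithin N f Set.univ x + iteratedDerivWithin N (g - h) Set.univ x :=
    iteratedDerivWithin_add (Set.mem_univ x) uniqueDiffOn_univ
      (hf.of_le le_top).contDiffWithinAt ((hg.sub hh).of_le le_top).contDiffWithinAt
  have e2 : iteratedDerivWithin N (g - h) Set.univ x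
      = iteratedDerivWithin N g Set.univ x - iteratedDerivWithin N h Set.univ x :=
    iteratedDerivWithin_sub (Set.mem_univ x) uniqueDiffOn_univ
      (hg.of_le le_top).contDiffWithinAt (hh.of_le le_top).contDiffWithinAt
  rw [e1, e2]

theorem stmt_11 (y₁ y₂ : ℝ) (m n : ℕ) (x : ℝ) :
    (∑ a ∈ Finset.range (n + 1), (Nat.choose (m + n + 1) (n - a) : ℝ) * 2 ^ (m + 1 + a) *
        eulerH 1 (n - a) (2 * x + y₁) * eulerH 1 (m + a + 1) (-x + y₂))
      + (∑ a ∈ Finset.range (m + 1), (Nat.choose (m + n + 1) (m - a) : ℝ) * 2 ^ (m - a) *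
        eulerH 1 (m - a) (-x + y₂) * eulerH 1 (n + a + 1) (2 * x + y₁))
    = eulerH 1 (m + n + 1) (2 * y₂ + y₁)
        + 2 ^ (m + n + 1) * eulerH 1 (m + n + 1) ((2 * y₂ + y₁) / 2)
        - 2 ^ (m + n + 1) * eulerH 1 (m + n + 1) ((2 * y₂ + y₁ + 1) / 2) := by
  set N := m + n + 1 with hN
  set z₁ := 2 * x + y₁ with hz1
  set z₂ := -x + y₂ with hz2
  set w := 2 * y₂ + y₁ with hw
  set c : ℕ → ℝ := fun j => (N.choose j : ℝ) * eulerH 1 j z₁ * (2^(N-j) * eulerH 1 (N-j) z₂)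
    with hc
  -- Step 1: LHS = ∑_{j=0}^{N} c j
  have step1 : (∑ a ∈ Finset.range (n + 1), (Nat.choose N (n - a) : ℝ) * 2 ^ (m + 1 + a) *
        eulerH 1 (n - a) z₁ * eulerH 1 (m + a + 1) z₂)
      + (∑ a ∈ Finset.range (m + 1), (Nat.choose N (m - a) : ℝ) * 2 ^ (m - a) *
        eulerH 1 (m - a) z₂ * eulerH 1 (n + a + 1) z₁)
      = ∑ j ∈ Finset.range (N + 1), c j := by
    have e1 : ∀ a ∈ Finset.range (n+1), (Nat.choose N (n - a) : ℝ) * 2 ^ (m + 1 + a) *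
        eulerH 1 (n - a) z₁ * eulerH 1 (m + a + 1) z₂ = c (n - a) := by
      intro a ha
      have haa := Finset.mem_range.mp ha
      have h1 : N - (n - a) = m + a + 1 := by omega
      have h2 : m + 1 + a = m + a + 1 := by omega
      rw [hc]; dsimp only; rw [h1, h2]; ring
    have e2 : ∀ a ∈ Finset.range (m+1), (Nat.choose N (m - a) : ℝ) * 2 ^ (m - a) *
        eulerH 1 (m - a) z₂ * eulerH 1 (n + a + 1) z₁ = c (n + 1 + a) := by
      intro a ha
      have haa := Finset.mem_range.mp ha
      have h1 : N - (n + 1 + a) = m - a := by omega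
      have h2 : N.choose (m - a) = N.choose (n + 1 + a) := by
        rw [← h1, Nat.choose_symm (by omega)]
      have h3 : n + a + 1 = n + 1 + a := by omega
      rw [hc]; dsimp only; rw [h1, ← h2, h3]; ring
    rw [Finset.sum_congr rfl e1, Finset.sum_congr rfl e2]
    have hrefl : ∑ a ∈ Finset.range (n+1), c (n - a) = ∑ j ∈ Finset.range (n+1), c j := by
      have := Finset.sum_range_reflect c (n+1)
      simpa only [Nat.add_sub_cancel] using this
    rw [hrefl]
    have hsplit : ∑ j ∈ Finset.range (N+1), c j
        = ∑ j ∈ Finset.range (n+1), c j + ∑ j ∈ Finset.range (m+1), c (n+1+j) := by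
      rw [show N + 1 = (n+1) + (m+1) by omega]
      exact Finset.sum_range_add c (n+1) (m+1)
    rw [hsplit]
  rw [step1]
  -- Step 2: Leibniz
  have hg2 := contDiff_Efun2 z₂
  have step2 : ∑ j ∈ Finset.range (N + 1), c j
      = iteratedDeriv N (fun u => Efun z₁ u * Efun z₂ (2*u)) 0 := by
    rw [congrFun (leibniz_aux (Efun z₁) (fun u => Efun z₂ (2*u)) (contDiff_Efun z₁) hg2 N) 0]
    refine Finset.sum_congr rfl (fun j _ => ?_)
    rw [hc]; dsimp only
    rw [iteratedDeriv_Efun2, eulerH_one_eq]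
  rw [step2]
  -- Step 3: pointwise identity and additivity
  have step3 : (fun u => Efun z₁ u * Efun z₂ (2*u))
      = fun u => Efun w u + ((fun v => Efun (w/2) (2*v)) u - (fun v => Efun ((w+1)/2) (2*v)) u) := by
    funext u
    exact key_fun x y₁ y₂ u
  rw [step3, iteratedDeriv_add_sub _ _ _ (contDiff_Efun w) (contDiff_Efun2 (w/2))
      (contDiff_Efun2 ((w+1)/2)) N 0,
    iteratedDeriv_Efun2, iteratedDeriv_Efun2, ← eulerH_one_eq]
  ring
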